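/- Let τ ∈ ℂ and let f, g : ℂ → ℂ be meromorphic at τ (MeromorphicAt), with the order of g at τ negative (g has a pole at τ) and the order of f at τ nonnegative. Then there exists L ∈ ℂ such that, along the punctured neighborhood filter 𝓝[≠]τ: f(t) → L, ‖g(t)‖ → +∞, and Metric.infDist((f(t), g(t)), {(x, y) ∈ ℂ × ℂ : x = L}) → 0. -/

import Mathlib

open Filter Topology

/-- A pole `τ` of `g` that is not a pole of `f` (both meromorphic at `τ`) yields a
vertical line `x = L` as a g-asymptote of the curve parametrized by `(f, g)`. -/
theorem vertical_asymptote_of_meromorphic_parametrization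
    (τ : ℂ) (f g : ℂ → ℂ)
    (hf : MeromorphicAt f τ) (hg : MeromorphicAt g τ)
    (hgord : meromorphicOrderAt g τ < 0) (hford : 0 ≤ meromorphicOrderAt f τ) :
    ∃ L : ℂ,
      Tendsto f (𝓝[≠] τ) (𝓝 L)
      ∧ Tendsto (fun t => ‖g t‖) (𝓝[≠] τ) atTop
      ∧ Tendsto (fun t => Metric.infDist ((f t, g t) : ℂ × ℂ)
            {p : ℂ × ℂ | p.1 = L}) (𝓝[≠] τ) (𝓝 0) := by
  -- Step 1: f tends to some limit L
  have hfL : ∃ L : ℂ, Tendsto f (𝓝[≠] τ) (𝓝 L) := by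
    rcases eq_or_ne (meromorphicOrderAt f τ) ⊤ with h | h
    · refine ⟨0, ?_⟩
      have h0 : ∀ᶠ z in 𝓝[≠] τ, f z = 0 := meromorphicOrderAt_eq_top_iff.mp h
      exact tendsto_const_nhds.congr' (h0.mono fun z hz => hz.symm)
    · obtain ⟨m, hm⟩ := WithTop.ne_top_iff_exists.mp h
      have hm0 : 0 ≤ m := by
        have := hford; rw [← hm] at this; exact_mod_cast this
      obtain ⟨F, hFan, hFne, hFeq⟩ := (meromorphicOrderAt_eq_int_iff hf).mp hm.symm
      set k : ℕ := m.toNat with hk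
      have hmk : (k : ℤ) = m := Int.toNat_of_nonneg hm0
      refine ⟨(τ - τ) ^ k * F τ, ?_⟩
      have hcont : ContinuousAt (fun z => (z - τ) ^ k * F z) τ :=
        (((continuous_id.sub continuous_const).pow k).continuousAt).mul
          hFan.continuousAt
      have := hcont.continuousWithinAt (s := {τ}ᶜ)
      refine this.tendsto.congr' (hFeq.mono fun z hz => ?_)
      rw [hz, ← hmk, zpow_natCast, smul_eq_mul]
  obtain ⟨L, hL⟩ := hfL
  refine ⟨L, hL, ?_, ?_⟩
  · -- Step 2: ‖g‖ → atTop
    have hne : meromorphicOrderAt g τ ≠ ⊤ := hgord.ne_top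
    obtain ⟨n, hn⟩ := WithTop.ne_top_iff_exists.mp hne
    have hn0 : n < 0 := by
      have := hgord; rw [← hn] at this; exact_mod_cast this
    obtain ⟨G, hGan, hGne, hGeq⟩ := (meromorphicOrderAt_eq_int_iff hg).mp hn.symm
    set k : ℕ := (-n).toNat with hk
    have hnk : (k : ℤ) = -n := Int.toNat_of_nonneg (by omega)
    have h1 : Tendsto (fun z : ℂ => ‖z - τ‖ ^ k) (𝓝[≠] τ) (𝓝[>] 0) := by
      rw [tendsto_nhdsWithin_iff]
      constructor
      · have : Tendsto (fun z : ℂ => z - τ) (𝓝[≠] τ) (𝓝 0) := by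
          have := (continuous_id.sub (continuous_const (y := τ))).tendsto τ
          exact (by simpa using this.mono_left nhdsWithin_le_nhds : Tendsto (id - fun _ : ℂ => τ) (𝓝[≠] τ) (𝓝 0))
        have hk1 : k ≠ 0 := by omega
        have := this.norm.pow k
        rwa [norm_zero, zero_pow hk1] at this
      · filter_upwards [self_mem_nhdsWithin] with z hz
        exact pow_pos (norm_pos_iff.mpr (sub_ne_zero.mpr hz)) k
    have h2 : Tendsto (fun z : ℂ => (‖z - τ‖ ^ k)⁻¹) (𝓝[≠] τ) atTop :=
      h1.inv_tendsto_nhdsGT_zero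
    have h3 : Tendsto (fun z => ‖G z‖) (𝓝[≠] τ) (𝓝 ‖G τ‖) :=
      (hGan.continuousAt.norm.continuousWithinAt (s := {τ}ᶜ)).tendsto
    have h4 : Tendsto (fun z : ℂ => (‖z - τ‖ ^ k)⁻¹ * ‖G z‖) (𝓝[≠] τ) atTop :=
      h2.atTop_mul_pos (norm_pos_iff.mpr hGne) h3
    refine h4.congr' (hGeq.mono fun z hz => ?_)
    show (‖z - τ‖ ^ k)⁻¹ * ‖G z‖ = ‖g z‖
    rw [hz, smul_eq_mul, norm_mul, norm_zpow]
    congr 1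
    rw [← zpow_natCast _ k, ← zpow_neg, hnk, neg_neg]
  · -- Step 3: infDist squeeze
    have hdist : Tendsto (fun t => dist (f t) L) (𝓝[≠] τ) (𝓝 0) :=
      tendsto_iff_dist_tendsto_zero.mp hL
    refine squeeze_zero (fun t => Metric.infDist_nonneg) (fun t => ?_) hdist
    have hmem : ((L, g t) : ℂ × ℂ) ∈ {p : ℂ × ℂ | p.1 = L} := rfl
    calc Metric.infDist ((f t, g t) : ℂ × ℂ) {p : ℂ × ℂ | p.1 = L}
        ≤ dist ((f t, g t) : ℂ × ℂ) (L, g t) := Metric.infDist_le_dist_of_mem hmem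
      _ = dist (f t) L := by
          rw [Prod.dist_eq]
          simp [max_eq_left dist_nonneg]
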